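/- Fix 0 < ε and let N be a natural number with 0 < N < 2^{(1/4−ε)n}. For distributions Q⁰,…,Q^N obtained by measuring an n-qubit state in N+1 mutually unbiased bases, with min-entropies H^i_∞ = −log₂ max_x Q^i(x), one has Σ_{i=0}^N H^i_∞ ≥ (N+1)(log₂(N+1) − μ(n)) where μ(n) is a function that is negligible in n (smaller than any inverse polynomial for large n). -/

import Mathlib

open scoped BigOperators

/-- A function is negligible if it is eventually smaller than every inverse polynomial. -/
def Negligible (μ : ℕ → ℝ) : Prop :=
  ∀ c : ℕ, ∃ n₀ : ℕ, ∀ n ≥ n₀, |μ n| ≤ 1 / (n : ℝ) ^ c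

open Finset Matrix Filter
open scoped InnerProductSpace ComplexConjugate Topology

private lemma gram_sum_bound {X : Type*} [Fintype X] {H : Type*} [NormedAddCommGroup H]
    [InnerProductSpace ℂ H] {m : ℕ} (β : Fin m → X → ℂ) (v : X → H)
    (hv : ∑ x, ‖v x‖ ^ 2 = 1) (α : ℝ) (hα : 0 ≤ α)
    (hd : ∀ i, ∑ x, conj (β i x) * β i x = 1)
    (ho : ∀ i j, i ≠ j → ‖∑ x, conj (β i x) * β j x‖ ≤ α) :
    ∑ i, ‖∑ x, conj (β i x) • v x‖ ^ 2 ≤ 1 + α * (m : ℝ) := by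
  classical
  set w : Fin m → H := fun i => ∑ x, conj (β i x) • v x with hw
  set S : ℝ := ∑ i, ‖w i‖ ^ 2 with hS
  have hS0 : 0 ≤ S := Finset.sum_nonneg fun i _ => sq_nonneg _
  set t : X → H := fun x => ∑ i, β i x • w i with ht
  set T : ℝ := ∑ x, ‖t x‖ ^ 2 with hT
  have hT0 : 0 ≤ T := Finset.sum_nonneg fun x _ => sq_nonneg _
  -- step 1 : S = re (∑ x, ⟪v x, t x⟫)
  have expand_w : ∀ i (y : H), (⟪w i, y⟫_ℂ) = ∑ x, β i x * ⟪v x, y⟫_ℂ := by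
    intro i y
    rw [hw]
    rw [sum_inner]
    exact Finset.sum_congr rfl fun x _ => by rw [inner_smul_left]; simp
  have step1 : ∑ i, (⟪w i, w i⟫_ℂ) = ∑ x, ⟪v x, t x⟫_ℂ := by
    calc ∑ i, (⟪w i, w i⟫_ℂ) = ∑ i, ∑ x, β i x * ⟪v x, w i⟫_ℂ := by
          exact Finset.sum_congr rfl fun i _ => expand_w i (w i)
      _ = ∑ x, ∑ i, β i x * ⟪v x, w i⟫_ℂ := Finset.sum_comm
      _ = ∑ x, ⟪v x, t x⟫_ℂ := by
          refine Finset.sum_congr rfl fun x _ => ?_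
          rw [ht, inner_sum]
          exact (Finset.sum_congr rfl fun i _ => by rw [inner_smul_right]).symm
  have hSre : S = (∑ x, ⟪v x, t x⟫_ℂ).re := by
    rw [← step1, Complex.re_sum, hS]
    exact Finset.sum_congr rfl fun i _ => (inner_self_eq_norm_sq (𝕜 := ℂ) (w i)).symm
  -- step 2 : S ≤ ∑ x, ‖v x‖ * ‖t x‖ and S^2 ≤ T
  have step2 : S ≤ ∑ x, ‖v x‖ * ‖t x‖ := by
    rw [hSre, Complex.re_sum]
    refine Finset.sum_le_sum fun x _ => ?_
    refine le_trans (Complex.re_le_norm _) ?_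
    exact norm_inner_le_norm _ _
  have hS2T : S ^ 2 ≤ T := by
    have := sum_mul_sq_le_sq_mul_sq Finset.univ (fun x => ‖v x‖) (fun x => ‖t x‖)
    have h2 : (∑ x, ‖v x‖ * ‖t x‖) ^ 2 ≤ T := by
      calc (∑ x, ‖v x‖ * ‖t x‖) ^ 2 ≤ (∑ x, ‖v x‖ ^ 2) * ∑ x, ‖t x‖ ^ 2 := this
        _ = T := by rw [hv, one_mul, hT]
    have hnn : 0 ≤ ∑ x, ‖v x‖ * ‖t x‖ :=
      Finset.sum_nonneg fun x _ => mul_nonneg (norm_nonneg _) (norm_nonneg _)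
    calc S ^ 2 ≤ (∑ x, ‖v x‖ * ‖t x‖) ^ 2 := by
          apply pow_le_pow_left₀ hS0 step2
      _ ≤ T := h2
  -- step 3 : T = re (∑ i, ∑ j, g i j * ⟪w i, w j⟫)
  have step3 : T = (∑ i, ∑ j, (∑ x, conj (β i x) * β j x) * ⟪w i, w j⟫_ℂ).re := by
    have htt : ∀ x, (⟪t x, t x⟫_ℂ) = ∑ i, ∑ j, (conj (β i x) * β j x) * ⟪w i, w j⟫_ℂ := by
      intro x
      rw [ht, sum_inner]
      simp only [inner_sum, inner_smul_left, inner_smul_right]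
      exact Finset.sum_congr rfl fun i _ => Finset.sum_congr rfl fun j _ => by ring
    have : ∑ x, (⟪t x, t x⟫_ℂ) = ∑ i, ∑ j, (∑ x, conj (β i x) * β j x) * ⟪w i, w j⟫_ℂ := by
      rw [Finset.sum_congr rfl fun x _ => htt x]
      rw [Finset.sum_comm]
      refine Finset.sum_congr rfl fun i _ => ?_
      rw [Finset.sum_comm]
      refine Finset.sum_congr rfl fun j _ => ?_
      rw [Finset.sum_mul]
    rw [← this, Complex.re_sum, hT]
    exact Finset.sum_congr rfl fun x _ => (inner_self_eq_norm_sq (𝕜 := ℂ) (t x)).symm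
  -- step 4 : T ≤ S + α * (∑ i, ‖w i‖)^2 ≤ S * (1 + α * m)
  have step4 : T ≤ S + α * (∑ i, ‖w i‖) ^ 2 := by
    rw [step3, Complex.re_sum]
    have hterm : ∀ i : Fin m, ((∑ j, (∑ x, conj (β i x) * β j x) * ⟪w i, w j⟫_ℂ).re)
        ≤ ‖w i‖ ^ 2 + α * (‖w i‖ * ∑ j, ‖w j‖) := by
      intro i
      rw [Complex.re_sum]
      have hb : ∀ j : Fin m, ((∑ x, conj (β i x) * β j x) * ⟪w i, w j⟫_ℂ).re ≤
          (if i = j then ‖w i‖ ^ 2 else 0) + α * (‖w i‖ * ‖w j‖) := by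
        intro j
        by_cases hij : i = j
        · subst hij
          rw [hd i, one_mul, if_pos rfl]
          have : (⟪w i, w i⟫_ℂ).re = ‖w i‖ ^ 2 := inner_self_eq_norm_sq (𝕜 := ℂ) (w i)
          rw [this]
          nlinarith [mul_nonneg hα (mul_nonneg (norm_nonneg (w i)) (norm_nonneg (w i)))]
        · rw [if_neg hij, zero_add]
          calc ((∑ x, conj (β i x) * β j x) * ⟪w i, w j⟫_ℂ).re
              ≤ ‖(∑ x, conj (β i x) * β j x) * ⟪w i, w j⟫_ℂ‖ := Complex.re_le_norm _
            _ = ‖∑ x, conj (β i x) * β j x‖ * ‖⟪w i, w j⟫_ℂ‖ := norm_mul _ _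
            _ ≤ α * (‖w i‖ * ‖w j‖) := by
                apply mul_le_mul (ho i j hij) (norm_inner_le_norm _ _) (norm_nonneg _) hα
      calc ∑ j, ((∑ x, conj (β i x) * β j x) * ⟪w i, w j⟫_ℂ).re
          ≤ ∑ j, ((if i = j then ‖w i‖ ^ 2 else 0) + α * (‖w i‖ * ‖w j‖)) :=
            Finset.sum_le_sum fun j _ => hb j
        _ = ‖w i‖ ^ 2 + α * (‖w i‖ * ∑ j, ‖w j‖) := by
            rw [Finset.sum_add_distrib, Finset.sum_ite_eq Finset.univ i (fun _ => ‖w i‖ ^ 2)]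
            simp [Finset.mul_sum]
    calc ∑ i, ((∑ j, (∑ x, conj (β i x) * β j x) * ⟪w i, w j⟫_ℂ).re)
        ≤ ∑ i, (‖w i‖ ^ 2 + α * (‖w i‖ * ∑ j, ‖w j‖)) := Finset.sum_le_sum fun i _ => hterm i
      _ = S + α * (∑ i, ‖w i‖) ^ 2 := by
          rw [Finset.sum_add_distrib, ← hS, ← Finset.mul_sum, ← Finset.sum_mul, sq]
  have hsq : (∑ i, ‖w i‖) ^ 2 ≤ (m : ℝ) * S := by
    have := sq_sum_le_card_mul_sum_sq (s := Finset.univ) (f := fun i : Fin m => ‖w i‖)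
    simpa [hS] using this
  have hTS : T ≤ S * (1 + α * m) := by
    have : α * (∑ i, ‖w i‖) ^ 2 ≤ α * ((m:ℝ) * S) := mul_le_mul_of_nonneg_left hsq hα
    nlinarith
  -- conclude
  have hfin : S ^ 2 ≤ S * (1 + α * m) := le_trans hS2T hTS
  rcases eq_or_lt_of_le hS0 with h | h
  · rw [← h]; positivity
  · nlinarith

private lemma sum_Q_eq_one {X : Type*} [Fintype X] [DecidableEq X] {H : Type*}
    [NormedAddCommGroup H] [InnerProductSpace ℂ H] (B : X → X → ℂ) (v : X → H)
    (hv : ∑ x, ‖v x‖ ^ 2 = 1)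
    (h : ∀ z z', ∑ x, conj (B z x) * B z' x = if z = z' then 1 else 0) :
    ∑ z, ‖∑ x, conj (B z x) • v x‖ ^ 2 = 1 := by
  classical
  -- column orthonormality
  have hconj : ∀ z z' : X, ∑ x, B z x * conj (B z' x) = if z = z' then 1 else 0 := by
    intro z z'
    have h4 : ∑ x, B z x * conj (B z' x) = conj (if z = z' then (1:ℂ) else 0) := by
      rw [← h z z', map_sum]
      exact Finset.sum_congr rfl fun x _ => by simp [_root_.map_mul, mul_comm]
    rw [h4]
    simp [apply_ite (starRingEnd ℂ)]
  have h1 : (Matrix.of B) * (Matrix.of B)ᴴ = 1 := by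
    ext z z'
    rw [Matrix.mul_apply, Matrix.one_apply]
    simp only [Matrix.conjTranspose_apply, Matrix.of_apply, RCLike.star_def]
    exact hconj z z'
  have h2 : (Matrix.of B)ᴴ * (Matrix.of B) = 1 := mul_eq_one_comm.mp h1
  have hcol : ∀ x y : X, ∑ z, B z x * conj (B z y) = if x = y then 1 else 0 := by
    intro x y
    have h3 := congrFun (congrFun h2 x) y
    rw [Matrix.mul_apply, Matrix.one_apply] at h3
    simp only [Matrix.conjTranspose_apply, Matrix.of_apply, RCLike.star_def] at h3
    have h4 : ∑ z, B z x * conj (B z y) = conj (if x = y then (1:ℂ) else 0) := by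
      rw [← h3, map_sum]
      exact Finset.sum_congr rfl fun z _ => by simp [_root_.map_mul, mul_comm]
    rw [h4]
    simp [apply_ite (starRingEnd ℂ)]
  -- expand the sum of inner products
  have key : ∑ z, (⟪∑ x, conj (B z x) • v x, ∑ x, conj (B z x) • v x⟫_ℂ)
      = ∑ x, ⟪v x, v x⟫_ℂ := by
    have hz : ∀ z, (⟪∑ x, conj (B z x) • v x, ∑ x, conj (B z x) • v x⟫_ℂ)
        = ∑ x, ∑ y, (B z x * conj (B z y)) * ⟪v x, v y⟫_ℂ := by
      intro z
      rw [sum_inner]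
      simp only [inner_sum, inner_smul_left, inner_smul_right, Complex.conj_conj]
      exact Finset.sum_congr rfl fun x _ => Finset.sum_congr rfl fun y _ => by ring
    calc ∑ z, (⟪∑ x, conj (B z x) • v x, ∑ x, conj (B z x) • v x⟫_ℂ)
        = ∑ z, ∑ x, ∑ y, (B z x * conj (B z y)) * ⟪v x, v y⟫_ℂ :=
          Finset.sum_congr rfl fun z _ => hz z
      _ = ∑ x, ∑ y, (∑ z, B z x * conj (B z y)) * ⟪v x, v y⟫_ℂ := by
          rw [Finset.sum_comm]
          refine Finset.sum_congr rfl fun x _ => ?_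
          rw [Finset.sum_comm]
          exact Finset.sum_congr rfl fun y _ => by rw [Finset.sum_mul]
      _ = ∑ x, ⟪v x, v x⟫_ℂ := by
          refine Finset.sum_congr rfl fun x _ => ?_
          rw [Finset.sum_congr rfl fun y (_ : y ∈ univ) => by rw [hcol x y]]
          simp [Finset.sum_ite_eq]
  have := congrArg Complex.re key
  rw [Complex.re_sum, Complex.re_sum] at this
  calc ∑ z, ‖∑ x, conj (B z x) • v x‖ ^ 2
      = ∑ z, (⟪∑ x, conj (B z x) • v x, ∑ x, conj (B z x) • v x⟫_ℂ).re :=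
        Finset.sum_congr rfl fun z _ => (inner_self_eq_norm_sq (𝕜 := ℂ) _).symm
    _ = ∑ x, (⟪v x, v x⟫_ℂ).re := this
    _ = ∑ x, ‖v x‖ ^ 2 := Finset.sum_congr rfl fun x _ => inner_self_eq_norm_sq (𝕜 := ℂ) _
    _ = 1 := hv

private lemma negligible_mu (ε : ℝ) (hε : 0 < ε) :
    Negligible (fun n => Real.logb 2 (1 + (2:ℝ) ^ (1 - (1/4 + ε) * (n:ℝ)))) := by
  set r : ℝ := (2:ℝ) ^ (-(1/4 + ε) : ℝ) with hr
  have hr0 : 0 ≤ r := (Real.rpow_pos_of_pos two_pos _).le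
  have hr1 : r < 1 := Real.rpow_lt_one_of_one_lt_of_neg one_lt_two (by linarith)
  have hD : ∀ n : ℕ, (2:ℝ) ^ (1 - (1/4 + ε) * (n:ℝ)) = 2 * r ^ n := by
    intro n
    rw [show (1 - (1/4 + ε) * (n:ℝ)) = 1 + (-(1/4 + ε)) * (n:ℝ) by ring,
      Real.rpow_add two_pos, Real.rpow_one, Real.rpow_mul (by norm_num : (0:ℝ) ≤ 2),
      Real.rpow_natCast]
  have hDpos : ∀ n : ℕ, 0 < (2:ℝ) ^ (1 - (1/4 + ε) * (n:ℝ)) :=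
    fun n => Real.rpow_pos_of_pos two_pos _
  have hl2 : 0 < Real.log 2 := Real.log_pos one_lt_two
  have hμnn : ∀ n : ℕ, 0 ≤ Real.logb 2 (1 + (2:ℝ) ^ (1 - (1/4 + ε) * (n:ℝ))) := by
    intro n
    exact Real.logb_nonneg one_lt_two (by nlinarith [hDpos n])
  have hμle : ∀ n : ℕ, Real.logb 2 (1 + (2:ℝ) ^ (1 - (1/4 + ε) * (n:ℝ)))
      ≤ (2 * r ^ n) / Real.log 2 := by
    intro n
    rw [Real.logb, hD n]
    have ht : (0:ℝ) < 1 + 2 * r ^ n := by positivity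
    have hlog : Real.log (1 + 2 * r ^ n) ≤ 2 * r ^ n := by
      have := Real.log_le_sub_one_of_pos ht
      linarith
    gcongr
  intro c
  have htend : Tendsto (fun n : ℕ => (n:ℝ) ^ c * (2 * r ^ n)) atTop (𝓝 0) := by
    have h1 := tendsto_pow_const_mul_const_pow_of_lt_one c hr0 hr1
    have h2 := h1.const_mul (2:ℝ)
    simp only [mul_zero] at h2
    convert h2 using 2 with n
    ring
  have hev := htend.eventually_lt_const hl2
  obtain ⟨n₀, hn₀⟩ := eventually_atTop.mp hev
  refine ⟨max n₀ 1, fun n hn => ?_⟩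
  have hn1 : 1 ≤ n := le_trans (le_max_right _ _) hn
  have hnn0 : n₀ ≤ n := le_trans (le_max_left _ _) hn
  have hpow : (0:ℝ) < (n:ℝ) ^ c := by
    have : (1:ℝ) ≤ (n:ℝ) := by exact_mod_cast hn1
    positivity
  rw [abs_of_nonneg (hμnn n), le_div_iff₀ hpow]
  have h5 := hμle n
  have h6 := (hn₀ n hnn0).le
  have h7 : Real.logb 2 (1 + (2:ℝ) ^ (1 - (1/4 + ε) * (n:ℝ))) * (n:ℝ) ^ c
      ≤ (2 * r ^ n) / Real.log 2 * (n:ℝ) ^ c := mul_le_mul_of_nonneg_right h5 hpow.le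
  have h8 : (2 * r ^ n) / Real.log 2 * (n:ℝ) ^ c = ((n:ℝ) ^ c * (2 * r ^ n)) / Real.log 2 := by
    ring
  have h9 : ((n:ℝ) ^ c * (2 * r ^ n)) / Real.log 2 ≤ 1 := (div_le_one hl2).mpr h6
  linarith [h8 ▸ h7]

/-- Corollary 2 of the paper: for `0 < N < 2^{(1/4−ε)n}` and distributions `Q⁰,…,Q^N`
obtained by measuring an `n`-qubit (purified) state in `N+1` mutually unbiased bases,
the min-entropies satisfy `∑ H^i_∞ ≥ (N+1)(log₂(N+1) − μ(n))` for a negligible `μ`.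

The state is purified with an ancilla of dimension `2^n`: `ψ = ∑ x, |x⟩ ⊗ v x` with
`∑ ‖v x‖² = 1`. The bases are given by their computational-basis coordinates `b i z x`,
each orthonormal, pairwise mutually unbiased, and `Qⁱ(z) = ‖∑ x, conj (b i z x) • v x‖²`,
with min-entropy `Hⁱ_∞ = −log₂ max_z Qⁱ(z)`. -/
theorem mub_minentropy_sum (ε : ℝ) (hε : 0 < ε) :
    ∃ μ : ℕ → ℝ, Negligible μ ∧
      ∀ (n N : ℕ), 0 < N → (N : ℝ) < (2 : ℝ) ^ ((1 / 4 - ε) * (n : ℝ)) →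
      ∀ (v : (Fin n → Bool) → EuclideanSpace ℂ (Fin n → Bool)),
        (∑ x : Fin n → Bool, ‖v x‖ ^ 2 = 1) →
      ∀ (b : Fin (N + 1) → (Fin n → Bool) → (Fin n → Bool) → ℂ),
        (∀ i z z', ∑ x : Fin n → Bool, starRingEnd ℂ (b i z x) * b i z' x =
          if z = z' then 1 else 0) →
        (∀ i j, i ≠ j → ∀ z w,
          ‖∑ x : Fin n → Bool, starRingEnd ℂ (b i z x) * b j w x‖ ^ 2 = ((2 : ℝ) ^ n)⁻¹) →
        ∑ i : Fin (N + 1),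
            (-(Real.logb 2 (⨆ z : Fin n → Bool,
                ‖∑ x : Fin n → Bool, (starRingEnd ℂ (b i z x)) • v x‖ ^ 2))) ≥
          ((N : ℝ) + 1) * (Real.logb 2 ((N : ℝ) + 1) - μ n) := by
  classical
  refine ⟨fun n => Real.logb 2 (1 + (2:ℝ) ^ (1 - (1/4 + ε) * (n:ℝ))),
    negligible_mu ε hε, ?_⟩
  intro n N hN hNlt v hv b horth hmub
  set Q : Fin (N+1) → (Fin n → Bool) → ℝ :=
    fun i z => ‖∑ x, conj (b i z x) • v x‖ ^ 2 with hQ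
  -- maximizers
  have hmax : ∀ i, ∃ z, ∀ z', Q i z' ≤ Q i z := fun i => Finite.exists_max (Q i)
  choose zm hzm using hmax
  set M : Fin (N+1) → ℝ := fun i => Q i (zm i) with hM
  have hsup : ∀ i, (⨆ z, Q i z) = M i := fun i =>
    le_antisymm (ciSup_le fun z => hzm i z) (le_ciSup (f := Q i) (Finite.bddAbove_range _) (zm i))
  have hsum1 : ∀ i, ∑ z, Q i z = 1 := fun i => sum_Q_eq_one (b i) v hv (horth i)
  have hQnn : ∀ i z, 0 ≤ Q i z := fun i z => sq_nonneg _
  have hMpos : ∀ i, 0 < M i := by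
    intro i
    rcases lt_or_ge 0 (M i) with h | h
    · exact h
    · exfalso
      have hz : ∀ z, Q i z = 0 := fun z => le_antisymm (le_trans (hzm i z) h) (hQnn i z)
      have := hsum1 i
      rw [Finset.sum_congr rfl fun z _ => hz z] at this
      simp at this
  -- Gram bound
  set α : ℝ := Real.sqrt ((2:ℝ)^n)⁻¹ with hα
  have hα0 : 0 ≤ α := Real.sqrt_nonneg _
  have hgram := gram_sum_bound (fun i => b i (zm i)) v hv α hα0
    (fun i => by have := horth i (zm i) (zm i); simpa using this)
    (fun i j hij => by
      have h1 := hmub i j hij (zm i) (zm j)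
      have h2 : ‖∑ x, conj (b i (zm i) x) * b j (zm j) x‖ = α := by
        rw [hα, ← h1, Real.sqrt_sq (norm_nonneg _)]
      exact le_of_eq h2)
  have hMsum : ∑ i, M i ≤ 1 + α * ((N:ℝ) + 1) := by
    have : ∑ i, M i = ∑ i : Fin (N+1), ‖∑ x, conj (b i (zm i) x) • v x‖ ^ 2 := rfl
    rw [this]
    convert hgram using 2
    push_cast
    ring
  -- arithmetic : α * (N+1) ≤ D n
  set D : ℝ := (2:ℝ) ^ (1 - (1/4 + ε) * (n:ℝ)) with hDdef
  have hDpos : 0 < D := Real.rpow_pos_of_pos two_pos _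
  have hαval : α = (2:ℝ) ^ (-(n:ℝ)/2) := by
    rw [hα, show ((2:ℝ)^n)⁻¹ = (2:ℝ) ^ (-(n:ℝ)) by
        rw [← Real.rpow_natCast 2 n, ← Real.rpow_neg (by norm_num)],
      Real.sqrt_eq_rpow, ← Real.rpow_mul (by norm_num : (0:ℝ) ≤ 2)]
    ring_nf
  have hαD : α * ((N:ℝ) + 1) ≤ D := by
    have hN1 : (1:ℝ) ≤ (N:ℝ) := by exact_mod_cast hN
    have h1 : (N:ℝ) + 1 ≤ 2 * (2:ℝ) ^ ((1/4 - ε) * (n:ℝ)) := by nlinarith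
    have hαpos : 0 < α := by rw [hαval]; exact Real.rpow_pos_of_pos two_pos _
    calc α * ((N:ℝ) + 1) ≤ α * (2 * (2:ℝ) ^ ((1/4 - ε) * (n:ℝ))) := by
          exact mul_le_mul_of_nonneg_left h1 hα0
      _ = D := by
          rw [hαval, hDdef]
          rw [show (1 - (1/4 + ε) * (n:ℝ)) = (-(n:ℝ)/2) + (1 + (1/4 - ε) * (n:ℝ)) by ring]
          rw [Real.rpow_add two_pos, Real.rpow_add two_pos, Real.rpow_one]
  have hMsumD : ∑ i, M i ≤ 1 + D := le_trans hMsum (by nlinarith [hαD])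
  -- AM-GM
  set k : ℝ := (N:ℝ) + 1 with hk
  have hk0 : (0:ℝ) < k := by positivity
  set B : ℝ := (1 + D) / k with hB
  have hB0 : 0 < B := by positivity
  set P : ℝ := ∏ i, M i with hP
  have hP0 : 0 < P := Finset.prod_pos fun i _ => hMpos i
  have hgm : P ^ ((1:ℝ)/k) ≤ B := by
    have h1 := Real.geom_mean_le_arith_mean_weighted Finset.univ
      (fun _ : Fin (N+1) => (1:ℝ)/k) M (fun i _ => by positivity)
      (by
        rw [Finset.sum_const, Finset.card_univ, Fintype.card_fin, nsmul_eq_mul]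
        push_cast
        field_simp
        exact hk.symm)
      (fun i _ => (hMpos i).le)
    rw [Real.finset_prod_rpow Finset.univ M (fun i _ => (hMpos i).le)] at h1
    calc P ^ ((1:ℝ)/k) ≤ ∑ i, (1/k) * M i := h1
      _ = (∑ i, M i) / k := by rw [← Finset.mul_sum]; ring
      _ ≤ B := by
          rw [hB]
          gcongr

  have hPB : P ≤ B ^ (N+1 : ℕ) := by
    calc P = (P ^ ((1:ℝ)/k)) ^ (k:ℝ) := by
          rw [← Real.rpow_mul hP0.le, one_div_mul_cancel hk0.ne', Real.rpow_one]
      _ ≤ B ^ (k:ℝ) := Real.rpow_le_rpow (Real.rpow_nonneg hP0.le _) hgm hk0.le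
      _ = B ^ (N+1 : ℕ) := by
          rw [hk, show ((N:ℝ)+1) = ((N+1 : ℕ):ℝ) by push_cast; ring, Real.rpow_natCast]
  have hlogP : Real.logb 2 P ≤ k * (Real.logb 2 (1 + D) - Real.logb 2 k) := by
    calc Real.logb 2 P ≤ Real.logb 2 (B ^ (N+1:ℕ)) :=
        Real.logb_le_logb_of_le one_lt_two hP0 hPB
      _ = ((N+1:ℕ):ℝ) * Real.logb 2 B := Real.logb_pow _ _ _
      _ = k * (Real.logb 2 (1+D) - Real.logb 2 k) := by
          rw [hB, Real.logb_div (by positivity : (0:ℝ) < 1 + D).ne' hk0.ne']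
          push_cast
          rw [hk]
  have hsumlog : ∑ i, -(Real.logb 2 (⨆ z, Q i z)) = -(Real.logb 2 P) := by
    rw [Finset.sum_congr rfl fun i (_ : i ∈ Finset.univ) => by rw [hsup i]]
    rw [hP, Real.logb_prod Finset.univ M (fun i _ => (hMpos i).ne')]
    exact Finset.sum_neg_distrib _
  rw [ge_iff_le]
  rw [hsumlog]
  have hβ : (fun n : ℕ => Real.logb 2 (1 + (2:ℝ) ^ (1 - (1/4 + ε) * (n:ℝ)))) n
      = Real.logb 2 (1 + D) := rfl
  rw [hβ]
  nlinarith [hlogP]
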